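/- Every core-compact open ω-well-filtered T0 space is locally compact, i.e., for every point x and open set U containing x there is a compact saturated set Q and an open set W with x ∈ W ⊆ Q ⊆ U. -/

import Mathlib

open Set

def RelCpt {X : Type*} [TopologicalSpace X] (A B : Set X) : Prop :=
  A ⊆ B ∧ ∀ 𝒰 : Set (Set X), (∀ U ∈ 𝒰, IsOpen U) → B ⊆ ⋃₀ 𝒰 →
    ∃ 𝒱 ⊆ 𝒰, 𝒱.Finite ∧ A ⊆ ⋃₀ 𝒱

def Saturated {X : Type*} [TopologicalSpace X] (A : Set X) : Prop :=
  A = ⋂₀ {U : Set X | IsOpen U ∧ A ⊆ U}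

def WellFiltered (X : Type*) [TopologicalSpace X] : Prop :=
  ∀ 𝒦 : Set (Set X), 𝒦.Nonempty →
    (∀ K ∈ 𝒦, IsCompact K ∧ Saturated K) →
    (∀ K₁ ∈ 𝒦, ∀ K₂ ∈ 𝒦, ∃ K₃ ∈ 𝒦, K₃ ⊆ K₁ ∧ K₃ ⊆ K₂) →
    ∀ U : Set X, IsOpen U → ⋂₀ 𝒦 ⊆ U → ∃ K ∈ 𝒦, K ⊆ U

def OmegaWellFiltered (X : Type*) [TopologicalSpace X] : Prop :=
  ∀ K : ℕ → Set X, (∀ n, IsCompact (K n) ∧ Saturated (K n)) →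
    (∀ m n : ℕ, ∃ k, K k ⊆ K m ∧ K k ⊆ K n) →
    ∀ U : Set X, IsOpen U → (⋂ n, K n) ⊆ U → ∃ n, K n ⊆ U

def SatWellFiltered (X : Type*) [TopologicalSpace X] : Prop :=
  ∀ 𝒜 : Set (Set X), 𝒜.Nonempty →
    (∀ A ∈ 𝒜, Saturated A) →
    (∀ A₁ ∈ 𝒜, ∀ A₂ ∈ 𝒜, ∃ A₃ ∈ 𝒜, RelCpt A₃ A₁ ∧ RelCpt A₃ A₂) →
    ∀ U : Set X, IsOpen U → ⋂₀ 𝒜 ⊆ U → ∃ A ∈ 𝒜, A ⊆ U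

def SatOmegaWellFiltered (X : Type*) [TopologicalSpace X] : Prop :=
  ∀ A : ℕ → Set X, (∀ n, Saturated (A n)) →
    (∀ m n : ℕ, ∃ k, RelCpt (A k) (A m) ∧ RelCpt (A k) (A n)) →
    ∀ U : Set X, IsOpen U → (⋂ n, A n) ⊆ U → ∃ n, A n ⊆ U

def OpenWellFiltered (X : Type*) [TopologicalSpace X] : Prop :=
  ∀ 𝒜 : Set (Set X), 𝒜.Nonempty →
    (∀ A ∈ 𝒜, IsOpen A) →
    (∀ A₁ ∈ 𝒜, ∀ A₂ ∈ 𝒜, ∃ A₃ ∈ 𝒜, RelCpt A₃ A₁ ∧ RelCpt A₃ A₂) →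
    ∀ U : Set X, IsOpen U → ⋂₀ 𝒜 ⊆ U → ∃ A ∈ 𝒜, A ⊆ U

def OpenOmegaWellFiltered (X : Type*) [TopologicalSpace X] : Prop :=
  ∀ A : ℕ → Set X, (∀ n, IsOpen (A n)) →
    (∀ m n : ℕ, ∃ k, RelCpt (A k) (A m) ∧ RelCpt (A k) (A n)) →
    ∀ U : Set X, IsOpen U → (⋂ n, A n) ⊆ U → ∃ n, A n ⊆ U

def CoreCompact (X : Type*) [TopologicalSpace X] : Prop :=
  ∀ (x : X) (U : Set X), IsOpen U → x ∈ U → ∃ V : Set X, IsOpen V ∧ x ∈ V ∧ RelCpt V U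

def Sober (X : Type*) [TopologicalSpace X] : Prop :=
  ∀ F : Set X, IsClosed F → F.Nonempty →
    (∀ F₁ F₂ : Set X, IsClosed F₁ → IsClosed F₂ → F ⊆ F₁ ∪ F₂ → F ⊆ F₁ ∨ F ⊆ F₂) →
    ∃! x : X, F = closure {x}

lemma relCpt_mono_left {X : Type*} [TopologicalSpace X] {A A' B : Set X}
    (h : A ⊆ A') (hA' : RelCpt A' B) : RelCpt A B := by
  refine ⟨h.trans hA'.1, fun 𝒰 hop hcov => ?_⟩
  obtain ⟨𝒱, h1, h2, h3⟩ := hA'.2 𝒰 hop hcov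
  exact ⟨𝒱, h1, h2, h.trans h3⟩

lemma relCpt_mono_right {X : Type*} [TopologicalSpace X] {A B B' : Set X}
    (hA : RelCpt A B) (h : B ⊆ B') : RelCpt A B' := by
  refine ⟨hA.1.trans h, fun 𝒰 hop hcov => hA.2 𝒰 hop (h.trans hcov)⟩

lemma relCpt_subset {X : Type*} [TopologicalSpace X] {A B : Set X}
    (hA : RelCpt A B) : A ⊆ B := hA.1

lemma relCpt_empty {X : Type*} [TopologicalSpace X] (B : Set X) : RelCpt (∅ : Set X) B :=
  ⟨empty_subset _, fun _ _ _ => ⟨∅, empty_subset _, finite_empty, by simp⟩⟩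

lemma relCpt_union {X : Type*} [TopologicalSpace X] {A A' B : Set X}
    (hA : RelCpt A B) (hA' : RelCpt A' B) : RelCpt (A ∪ A') B := by
  refine ⟨union_subset hA.1 hA'.1, fun 𝒰 hop hcov => ?_⟩
  obtain ⟨𝒱, h1, h2, h3⟩ := hA.2 𝒰 hop hcov
  obtain ⟨𝒱', h1', h2', h3'⟩ := hA'.2 𝒰 hop hcov
  refine ⟨𝒱 ∪ 𝒱', union_subset h1 h1', h2.union h2', union_subset ?_ ?_⟩
  · exact h3.trans (sUnion_mono subset_union_left)
  · exact h3'.trans (sUnion_mono subset_union_right)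

lemma relCpt_sUnion {X : Type*} [TopologicalSpace X] {𝒮 : Set (Set X)} {B : Set X}
    (hfin : 𝒮.Finite) (h : ∀ s ∈ 𝒮, RelCpt s B) : RelCpt (⋃₀ 𝒮) B := by
  revert h
  refine Set.Finite.induction_on
    (motive := fun 𝒮 _ => (∀ s ∈ 𝒮, RelCpt s B) → RelCpt (⋃₀ 𝒮) B) 𝒮 hfin ?_ ?_
  · intro _; simpa using relCpt_empty B
  · intro a s _ _ ih h
    rw [sUnion_insert]
    exact relCpt_union (h _ (mem_insert _ _)) (ih fun s hs => h s (mem_insert_of_mem _ hs))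

/-- interpolation in core-compact spaces -/
lemma relCpt_interp {X : Type*} [TopologicalSpace X] (hcc : CoreCompact X) {V U : Set X}
    (hU : IsOpen U) (h : RelCpt V U) : ∃ W, IsOpen W ∧ RelCpt V W ∧ RelCpt W U := by
  have h1 : ∀ y ∈ U, ∃ V1 : Set X, IsOpen V1 ∧ y ∈ V1 ∧ RelCpt V1 U :=
    fun y hy => hcc y U hU hy
  choose! f hf1 hf2 hf3 using h1
  have h2 : ∀ y ∈ U, ∃ V2 : Set X, IsOpen V2 ∧ y ∈ V2 ∧ RelCpt V2 (f y) :=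
    fun y hy => hcc y (f y) (hf1 y hy) (hf2 y hy)
  choose! g hg1 hg2 hg3 using h2
  obtain ⟨𝒱, h𝒱sub, h𝒱fin, hV𝒱⟩ := h.2 (g '' U)
    (by rintro _ ⟨y, hy, rfl⟩; exact hg1 y hy)
    (fun z hz => ⟨g z, ⟨z, hz, rfl⟩, hg2 z hz⟩)
  have hO : ∀ s ∈ 𝒱, ∃ O : Set X, IsOpen O ∧ RelCpt s O ∧ RelCpt O U := fun s hs => by
    obtain ⟨y, hy, rfl⟩ := h𝒱sub hs
    exact ⟨f y, hf1 y hy, hg3 y hy, hf3 y hy⟩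
  choose! O hO1 hO2 hO3 using hO
  refine ⟨⋃₀ (O '' 𝒱), ?_, ?_, ?_⟩
  · exact isOpen_sUnion (by rintro _ ⟨s, hs, rfl⟩; exact hO1 _ hs)
  · refine relCpt_mono_left hV𝒱 (relCpt_sUnion h𝒱fin fun s hs => ?_)
    exact relCpt_mono_right (hO2 s hs) (subset_sUnion_of_mem ⟨s, hs, rfl⟩)
  · exact relCpt_sUnion (h𝒱fin.image _) (by rintro _ ⟨s, hs, rfl⟩; exact hO3 _ hs)

/-- Every core-compact open ω-well-filtered space is locally compact. -/
theorem stmt12 (X : Type*) [TopologicalSpace X] [T0Space X]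
    (hcc : CoreCompact X) (howf : OpenOmegaWellFiltered X) :
    ∀ (x : X) (U : Set X), IsOpen U → x ∈ U →
      ∃ W Q : Set X, IsOpen W ∧ IsCompact Q ∧ Saturated Q ∧ x ∈ W ∧ W ⊆ Q ∧ Q ⊆ U := by
  classical
  intro x U hU hxU
  obtain ⟨V, hVopen, hxV, hVU⟩ := hcc x U hU hxU
  have step : ∀ p : {W : Set X // IsOpen W ∧ RelCpt V W ∧ W ⊆ U},
      ∃ q : {W : Set X // IsOpen W ∧ RelCpt V W ∧ W ⊆ U}, RelCpt q.1 p.1 := by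
    rintro ⟨W, hWo, hVW, hWU⟩
    obtain ⟨W', hW'o, h1, h2⟩ := relCpt_interp hcc hWo hVW
    exact ⟨⟨W', hW'o, h1, h2.1.trans hWU⟩, h2⟩
  choose g hg using step
  obtain ⟨W₀, hW₀o, hVW₀, hW₀U⟩ := relCpt_interp hcc hU hVU
  set p₀ : {W : Set X // IsOpen W ∧ RelCpt V W ∧ W ⊆ U} := ⟨W₀, hW₀o, hVW₀, hW₀U.1⟩
    with hp₀
  set A : ℕ → Set X := fun n => (g^[n] p₀).1 with hA
  have hprop : ∀ n, IsOpen (A n) ∧ RelCpt V (A n) ∧ A n ⊆ U := fun n => (g^[n] p₀).2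
  have hchain : ∀ n, RelCpt (A (n + 1)) (A n) := by
    intro n
    have h1 : g^[n + 1] p₀ = g (g^[n] p₀) := Function.iterate_succ_apply' g n p₀
    simp only [hA, h1]
    exact hg _
  have hdec : ∀ m n, m ≤ n → A n ⊆ A m := by
    intro m n h
    induction h with
    | refl => exact subset_rfl
    | step _ ih => exact (hchain _).1.trans ih
  set Q : Set X := ⋂ n, A n with hQ
  have hdir : ∀ m n : ℕ, ∃ k, RelCpt (A k) (A m) ∧ RelCpt (A k) (A n) := by
    intro m n
    refine ⟨max m n + 1, ?_, ?_⟩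
    · exact relCpt_mono_left (hdec _ _ (by omega)) (hchain m)
    · exact relCpt_mono_left (hdec _ _ (by omega)) (hchain n)
  have hQA : ∀ n, Q ⊆ A n := fun n => iInter_subset A n
  have hQcpt : IsCompact Q := by
    refine isCompact_of_finite_subcover fun {ι} Ucov hopen hcov => ?_
    obtain ⟨n, hn⟩ := howf A (fun n => (hprop n).1) hdir (⋃ i, Ucov i)
      (isOpen_iUnion hopen) hcov
    obtain ⟨𝒱, hsub, hfin, hsubcov⟩ := (hchain n).2 (range Ucov)
      (by rintro _ ⟨i, rfl⟩; exact hopen i) (by rwa [sUnion_range])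
    have hidx : ∀ s ∈ 𝒱, ∃ i, Ucov i = s := fun s hs => hsub hs
    choose idx hidxeq using hidx
    refine ⟨hfin.toFinset.attach.image
      (fun s => idx s.1 (hfin.mem_toFinset.mp s.2)), ?_⟩
    intro z hz
    obtain ⟨s, hs𝒱, hzs⟩ := hsubcov (hQA (n + 1) hz)
    have hmem : s ∈ hfin.toFinset := hfin.mem_toFinset.mpr hs𝒱
    refine mem_iUnion₂.mpr ⟨idx s (hfin.mem_toFinset.mp hmem), ?_, ?_⟩
    · exact Finset.mem_image.mpr ⟨⟨s, hmem⟩, Finset.mem_attach _ _, rfl⟩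
    · rw [hidxeq s (hfin.mem_toFinset.mp hmem)]; exact hzs
  have hQsat : Saturated Q := by
    refine Subset.antisymm (subset_sInter fun O hO => hO.2) ?_
    intro z hz
    exact mem_iInter.mpr fun n => mem_sInter.mp hz (A n) ⟨(hprop n).1, hQA n⟩
  refine ⟨V, Q, hVopen, hQcpt, hQsat, hxV, ?_, (hQA 0).trans (hprop 0).2.2⟩
  exact subset_iInter fun n => (hprop n).2.1.1
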